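/- For every n ≥ 1, the number of Hessenberg functions h : {1,…,n} → {1,…,n} such that I_h is abelian and strictly negative (i.e., h(i) ≥ i+1 for all 1 ≤ i ≤ n−1) equals 2^{n−1} − (n−1). -/

import Mathlib

/-- `h` is a Hessenberg function on `{1,…,n}`. -/
def IsHessenberg (n : ℕ) (h : ℕ → ℕ) : Prop :=
  (∀ i, 1 ≤ i → i ≤ n → i ≤ h i ∧ h i ≤ n) ∧
  (∀ i, 1 ≤ i → i < n → h i ≤ h (i + 1))

/-- The ideal `I_h`. -/
def Ih (n : ℕ) (h : ℕ → ℕ) : Set (ℕ × ℕ) :=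
  {p | 1 ≤ p.2 ∧ p.2 < p.1 ∧ p.1 ≤ n ∧ h p.2 < p.1}

/-- `I_h` is abelian. -/
def IhAbelian (n : ℕ) (h : ℕ → ℕ) : Prop :=
  ¬ ∃ i j k, (i, j) ∈ Ih n h ∧ (j, k) ∈ Ih n h

/-- Counting Hessenberg functions on `{1,…,n}`, normalized to vanish outside
`{1,…,n}`, whose ideal `I_h` is abelian and strictly negative
(`h(i) ≥ i+1` for `1 ≤ i ≤ n−1`): there are `2^(n−1) − (n−1)` of them. -/
lemma hess_mono {n : ℕ} {h : ℕ → ℕ} (H : IsHessenberg n h) :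
    ∀ k l, 1 ≤ k → k ≤ l → l ≤ n → h k ≤ h l := by
  have key : ∀ d k, 1 ≤ k → k + d ≤ n → h k ≤ h (k + d) := by
    intro d
    induction d with
    | zero => intro k _ _; simp
    | succ d ih =>
      intro k hk hkd
      have h1 : h k ≤ h (k + d) := ih k hk (by omega)
      have h2 : h (k + d) ≤ h (k + d + 1) := H.2 (k + d) (by omega) (by omega)
      have e : k + (d + 1) = k + d + 1 := by omega
      rw [e]
      omega
  intro k l hk hkl hln
  have := key (l - k) k hk (by omega)
  have hlk : k + (l - k) = l := by omega
  rwa [hlk] at this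

lemma abelian_iff {n : ℕ} {h : ℕ → ℕ} (H : IsHessenberg n h) :
    IhAbelian n h ↔ ∀ j, h 1 < j → j < n → h j = n := by
  constructor
  · intro hab j hj1 hjn
    by_contra hne
    have hj2 : 1 ≤ j := by
      have := (H.1 1 le_rfl (by omega)).1
      omega
    have hle : h j ≤ n := (H.1 j hj2 (by omega)).2
    have hlt : h j < n := lt_of_le_of_ne hle hne
    have h11 : 1 ≤ h 1 := (H.1 1 le_rfl (by omega)).1
    refine hab ⟨n, j, 1, ?_, ?_⟩ <;> simp only [Ih, Set.mem_setOf_eq]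
    · exact ⟨hj2, hjn, le_rfl, hlt⟩
    · exact ⟨le_rfl, by omega, by omega, hj1⟩
  · rintro hcond ⟨i, j, k, hm1, hm2⟩
    simp only [Ih, Set.mem_setOf_eq] at hm1 hm2
    obtain ⟨hk1, hji, hin, hji2⟩ := hm1
    obtain ⟨hk2, hkj, hjn, hkj2⟩ := hm2
    -- from (i,j) ∈ Ih : 1 ≤ j, j < i, i ≤ n, h j < i
    -- from (j,k) ∈ Ih : 1 ≤ k, k < j, j ≤ n, h k < j
    have h1k : h 1 ≤ h k := hess_mono H 1 k le_rfl hk2 (by omega)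
    have hjlt : j < n := by omega
    have : h j = n := hcond j (by omega) hjlt
    omega


def nthEl (S : Finset ℕ) (k : ℕ) : ℕ := (S.sort (· ≤ ·)).getD k 0

lemma nthEl_strictMono {T : Finset ℕ} {i j : ℕ} (hij : i < j) (hj : j < T.card) :
    nthEl T i < nthEl T j := by
  have hl : (T.sort (· ≤ ·)).length = T.card := Finset.length_sort _
  have hi' : i < (T.sort (· ≤ ·)).length := by omega
  have hj' : j < (T.sort (· ≤ ·)).length := by omega
  unfold nthEl
  rw [List.getD_eq_getElem _ _ hi', List.getD_eq_getElem _ _ hj']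
  exact (T.sortedLT_sort).pairwise.rel_get_of_lt (a := ⟨i, hi'⟩) (b := ⟨j, hj'⟩) hij

lemma nthEl_mem {T : Finset ℕ} {k : ℕ} (hk : k < T.card) : nthEl T k ∈ T := by
  have hl : (T.sort (· ≤ ·)).length = T.card := Finset.length_sort _
  have hk' : k < (T.sort (· ≤ ·)).length := by omega
  unfold nthEl
  rw [List.getD_eq_getElem _ _ hk']
  exact (Finset.mem_sort (· ≤ ·)).1 (List.getElem_mem _)

lemma nthEl_of_mem {T : Finset ℕ} {x : ℕ} (hx : x ∈ T) :
    ∃ i, i < T.card ∧ nthEl T i = x := by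
  have hl : (T.sort (· ≤ ·)).length = T.card := Finset.length_sort _
  have hx' : x ∈ T.sort (· ≤ ·) := (Finset.mem_sort (· ≤ ·)).2 hx
  obtain ⟨i, hi⟩ := List.get_of_mem hx'
  refine ⟨i, by omega, ?_⟩
  unfold nthEl
  rw [List.getD_eq_getElem _ _ i.isLt, ← List.get_eq_getElem]
  exact hi

lemma le_nthEl_last {T : Finset ℕ} {x : ℕ} (hx : x ∈ T) : x ≤ nthEl T (T.card - 1) := by
  obtain ⟨i, hi, he⟩ := nthEl_of_mem hx
  rcases eq_or_lt_of_le (Nat.le_of_lt_succ (by omega : i < T.card - 1 + 1)) with heq | hlt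
  · rw [← heq]; omega
  · have := nthEl_strictMono (T := T) hlt (by omega)
    omega

lemma nthEl_zero {S : Finset ℕ} : nthEl (insert 0 S) 0 = 0 := by
  have h0 : (0 : ℕ) ∈ insert 0 S := Finset.mem_insert_self _ _
  obtain ⟨i, hi, he⟩ := nthEl_of_mem h0
  rcases Nat.eq_zero_or_pos i with hz | hp
  · rw [hz] at he; exact he
  · have := nthEl_strictMono (T := insert 0 S) (i := 0) (j := i) hp hi
    omega

lemma nthEl_ge {S : Finset ℕ} : ∀ k, k < (insert 0 S).card → k ≤ nthEl (insert 0 S) k := by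
  intro k
  induction k with
  | zero => intro _; simp [nthEl_zero]
  | succ k ih =>
    intro hk
    have h1 := ih (by omega)
    have h2 := nthEl_strictMono (T := insert 0 S) (i := k) (j := k + 1) (by omega) hk
    omega

lemma sort_image_eq {m : ℕ} {f : ℕ → ℕ}
    (hmono : ∀ k l, 1 ≤ k → k < l → l ≤ m → f k < f l) :
    (Finset.image f (Finset.Icc 1 m)).sort (· ≤ ·) =
      (List.range m).map (fun i => f (i + 1)) := by
  set L := (List.range m).map (fun i => f (i + 1)) with hL
  have hlen : L.length = m := by simp [hL]
  have hsorted : L.Pairwise (· < ·) := by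
    rw [List.pairwise_iff_get]
    intro i j hij
    have hi : L.get i = f ((i : ℕ) + 1) := by simp [hL]
    have hj : L.get j = f ((j : ℕ) + 1) := by simp [hL]
    rw [hi, hj]
    exact hmono _ _ (by omega) (by omega) (by omega : (j : ℕ) + 1 ≤ m)
  have hnodup : L.Nodup := hsorted.sortedLT.nodup
  have htf : L.toFinset = Finset.image f (Finset.Icc 1 m) := by
    ext x
    simp only [hL, List.mem_toFinset, List.mem_map, List.mem_range, Finset.mem_image,
      Finset.mem_Icc]
    constructor
    · rintro ⟨i, hi, rfl⟩; exact ⟨i + 1, ⟨by omega, by omega⟩, rfl⟩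
    · rintro ⟨k, ⟨hk1, hk2⟩, rfl⟩; exact ⟨k - 1, by omega, by congr 1; omega⟩
  refine List.Perm.eq_of_pairwise' (Finset.pairwise_sort _ _) (hsorted.imp le_of_lt) ?_
  exact List.perm_of_nodup_nodup_toFinset_eq (Finset.sort_nodup _ _) hnodup
    (by rw [Finset.sort_toFinset, htf])

lemma nthEl_image {m : ℕ} {f : ℕ → ℕ}
    (hmono : ∀ k l, 1 ≤ k → k < l → l ≤ m → f k < f l) :
    ∀ k, 1 ≤ k → k ≤ m → nthEl (Finset.image f (Finset.Icc 1 m)) (k - 1) = f k := by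
  intro k hk1 hk2
  unfold nthEl
  rw [sort_image_eq hmono]
  have hlen : ((List.range m).map (fun i => f (i + 1))).length = m := by simp
  rw [List.getD_eq_getElem _ _ (by omega)]
  simp only [List.getElem_map, List.getElem_range]
  congr 1
  omega

lemma nthEl_gap {S : Finset ℕ} : ∀ d i, i + d < (insert 0 S).card →
    nthEl (insert 0 S) i + d ≤ nthEl (insert 0 S) (i + d) := by
  intro d
  induction d with
  | zero => intro i _; simp
  | succ d ih =>
    intro i hi
    have h1 := ih i (by omega)
    have h2 := nthEl_strictMono (T := insert 0 S) (i := i + d) (j := i + d + 1) (by omega) (by omega)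
    have e : i + (d + 1) = i + d + 1 := by omega
    rw [e]
    omega

def Psi (n : ℕ) (S : Finset ℕ) : ℕ → ℕ :=
  fun k => if k = 0 then 0
    else if k ≤ S.card + 1 then nthEl (insert 0 S) (k - 1) + (S.card + 2 - k)
    else if k ≤ n then n else 0

def goodFinset (n : ℕ) : Finset (Finset ℕ) :=
  (Finset.Icc 1 (n-1)).powerset \
    insert ∅ ((Finset.Icc 1 (n-2)).image (fun b => Finset.Icc 1 b))

lemma mem_goodFinset {n : ℕ} {S : Finset ℕ} : S ∈ goodFinset n ↔
    S ⊆ Finset.Icc 1 (n-1) ∧ S ≠ ∅ ∧ ∀ b, 1 ≤ b → b ≤ n - 2 → S ≠ Finset.Icc 1 b := by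
  unfold goodFinset
  simp only [Finset.mem_sdiff, Finset.mem_powerset, Finset.mem_insert, Finset.mem_image,
    Finset.mem_Icc, not_or, not_exists, not_and]
  constructor
  · rintro ⟨h1, h2, h3⟩
    exact ⟨h1, h2, fun b hb1 hb2 hbe => h3 b ⟨hb1, hb2⟩ hbe.symm⟩
  · rintro ⟨h1, h2, h3⟩
    exact ⟨h1, h2, fun b hb hbe => h3 b hb.1 hb.2 hbe.symm⟩

section PsiFacts

variable {n : ℕ} {S : Finset ℕ} (hn : 2 ≤ n)
  (hS1 : S ⊆ Finset.Icc 1 (n-1)) (hS2 : S ≠ ∅)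
  (hS3 : ∀ b, 1 ≤ b → b ≤ n - 2 → S ≠ Finset.Icc 1 b)

include hS1 in
lemma zero_not_mem_S : 0 ∉ S := fun h => by simpa using (Finset.mem_Icc.1 (hS1 h)).1

include hS1 in
lemma card_insert_S : (insert 0 S).card = S.card + 1 :=
  Finset.card_insert_of_notMem (zero_not_mem_S hS1)

include hS1 hS2 in
lemma card_S_bounds : 1 ≤ S.card ∧ S.card ≤ n - 1 := by
  constructor
  · exact Finset.card_pos.2 (Finset.nonempty_iff_ne_empty.2 hS2)
  · calc S.card ≤ (Finset.Icc 1 (n-1)).card := Finset.card_le_card hS1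
      _ = n - 1 := by rw [Nat.card_Icc]; omega

include hS1 in
lemma nthEl_le_nm1 {k : ℕ} (hk : k ≤ S.card) : nthEl (insert 0 S) k ≤ n - 1 := by
  rcases Nat.eq_zero_or_pos k with rfl | hp
  · rw [nthEl_zero]; omega
  · have hmem : nthEl (insert 0 S) k ∈ insert 0 S := by
      apply nthEl_mem; rw [card_insert_S hS1]; omega
    have hge : k ≤ nthEl (insert 0 S) k := by
      apply nthEl_ge; rw [card_insert_S hS1]; omega
    rcases Finset.mem_insert.1 hmem with he | hmem2
    · omega
    · exact (Finset.mem_Icc.1 (hS1 hmem2)).2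

include hS1 hS2 hS3 in
lemma max_ge_of_good (ha : S.card + 1 ≤ n - 1) : S.card + 1 ≤ nthEl (insert 0 S) S.card := by
  by_contra hcon
  push_neg at hcon
  have hsub : S ⊆ Finset.Icc 1 (nthEl (insert 0 S) S.card) := by
    intro x hx
    have hx1 : 1 ≤ x := (Finset.mem_Icc.1 (hS1 hx)).1
    have hx2 : x ≤ nthEl (insert 0 S) ((insert 0 S).card - 1) :=
      le_nthEl_last (Finset.mem_insert_of_mem hx)
    rw [card_insert_S hS1] at hx2
    simp only [Nat.add_sub_cancel] at hx2
    exact Finset.mem_Icc.2 ⟨hx1, hx2⟩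
  have hge : S.card ≤ nthEl (insert 0 S) S.card := by
    apply nthEl_ge; rw [card_insert_S hS1]; omega
  have hNe : nthEl (insert 0 S) S.card = S.card := by omega
  rw [hNe] at hsub
  have hcard : (Finset.Icc 1 S.card).card = S.card := by rw [Nat.card_Icc]; omega
  have heq : S = Finset.Icc 1 S.card :=
    Finset.eq_of_subset_of_card_le hsub (by omega)
  have hc1 : 1 ≤ S.card := (card_S_bounds hS1 hS2).1
  exact hS3 S.card hc1 (by omega) heq

include hS1 in
lemma Psi_val {k : ℕ} (hk1 : 1 ≤ k) (hk2 : k ≤ S.card + 1) :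
    Psi n S k = nthEl (insert 0 S) (k - 1) + (S.card + 2 - k) := by
  unfold Psi
  rw [if_neg (by omega), if_pos hk2]

lemma Psi_val_top {k : ℕ} (hk1 : S.card + 1 < k) (hk2 : k ≤ n) : Psi n S k = n := by
  unfold Psi
  rw [if_neg (by omega), if_neg (by omega), if_pos hk2]

lemma Psi_val_out {k : ℕ} (hk : k ∉ Set.Icc 1 n) (hc : S.card + 1 ≤ n) : Psi n S k = 0 := by
  simp only [Set.mem_Icc, not_and, not_le] at hk
  unfold Psi
  rcases Nat.eq_zero_or_pos k with rfl | hp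
  · simp
  · have := hk hp
    rw [if_neg (by omega), if_neg (by omega), if_neg (by omega)]

include hS1 in
lemma Psi_one : Psi n S 1 = S.card + 1 := by
  rw [Psi_val hS1 le_rfl (by omega)]
  simp [nthEl_zero]

end PsiFacts

lemma Psi_mem {n : ℕ} (hn : 2 ≤ n) {S : Finset ℕ} (hS : S ∈ goodFinset n) :
    (∀ i, i ∉ Set.Icc 1 n → Psi n S i = 0) ∧ IsHessenberg n (Psi n S) ∧
      IhAbelian n (Psi n S) ∧ (∀ i, 1 ≤ i → i ≤ n - 1 → i + 1 ≤ Psi n S i) := by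
  obtain ⟨hS1, hS2, hS3⟩ := mem_goodFinset.1 hS
  set a := S.card + 1 with ha
  have hc := card_S_bounds hS1 hS2
  have hci := card_insert_S hS1
  have han : a ≤ n := by omega
  have ha2 : 2 ≤ a := by omega
  -- value bounds for 1 ≤ k ≤ a
  have hval : ∀ k, 1 ≤ k → k ≤ a → Psi n S k = nthEl (insert 0 S) (k - 1) + (S.card + 2 - k) :=
    fun k hk1 hk2 => Psi_val hS1 hk1 hk2
  have hge : ∀ k, 1 ≤ k → k ≤ a → a ≤ Psi n S k := by
    intro k hk1 hk2
    rw [hval k hk1 hk2]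
    have := nthEl_ge (S := S) (k - 1) (by omega)
    omega
  have hlen : ∀ k, 1 ≤ k → k ≤ a → Psi n S k ≤ n := by
    intro k hk1 hk2
    rw [hval k hk1 hk2]
    have hgap := nthEl_gap (S := S) (a - 1 - (k - 1)) (k - 1) (by omega)
    have he : k - 1 + (a - 1 - (k - 1)) = a - 1 := by omega
    rw [he] at hgap
    have hle := nthEl_le_nm1 hS1 (k := a - 1) (by omega)
    omega
  have hmono : ∀ k, 1 ≤ k → k < n → Psi n S k ≤ Psi n S (k + 1) := by
    intro k hk1 hkn
    rcases lt_or_ge k a with hka | hka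
    · rcases eq_or_lt_of_le (Nat.succ_le_of_lt hka) with he | hlt
      · -- k + 1 = a case is covered by k+1 ≤ a; here he : k+1 = a? eq_or_lt on k < a gives k+1 ≤ a
        rw [hval k hk1 (by omega), hval (k+1) (by omega) (by omega)]
        have := nthEl_strictMono (T := insert 0 S) (i := k - 1) (j := k) (by omega) (by omega)
        have e : k + 1 - 1 = k := by omega
        rw [e]
        omega
      · rw [hval k hk1 (by omega), hval (k+1) (by omega) (by omega)]
        have := nthEl_strictMono (T := insert 0 S) (i := k - 1) (j := k) (by omega) (by omega)
        have e : k + 1 - 1 = k := by omega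
        rw [e]
        omega
    · -- k ≥ a : Psi k ≤ n = Psi (k+1)
      rcases eq_or_lt_of_le hka with he | hlt
      · rw [Psi_val_top (k := k + 1) (by omega) (by omega)]
        exact hlen k hk1 (by omega)
      · rw [Psi_val_top (k := k) (by omega) (by omega),
          Psi_val_top (k := k + 1) (by omega) (by omega)]
  have hstrict : ∀ k, 1 ≤ k → k ≤ n - 1 → k + 1 ≤ Psi n S k := by
    intro k hk1 hk2
    rcases lt_or_ge k a with hka | hka
    · rcases eq_or_lt_of_le (by omega : k ≤ a) with he | hlt
      · -- k = a ≤ n - 1 : use max_ge_of_good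
        have hmax := max_ge_of_good hS1 hS2 hS3 (by omega)
        rw [hval k hk1 (by omega)]
        subst he
        have e : S.card + 1 - 1 = S.card := by omega
        rw [e]
        omega
      · have := hge k hk1 (by omega)
        omega
    · rcases eq_or_lt_of_le hka with he | hlt
      · have hmax := max_ge_of_good hS1 hS2 hS3 (by omega)
        rw [hval k hk1 (by omega), ← he]
        have e : a - 1 = S.card := by omega
        rw [e]
        omega
      · rw [Psi_val_top (k := k) (by omega) (by omega)]
        omega
  have hhess : IsHessenberg n (Psi n S) := by
    constructor
    · intro i hi1 hi2
      rcases le_or_gt i a with hia | hia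
      · exact ⟨le_trans (by omega) (hge i hi1 hia), hlen i hi1 hia⟩
      · rw [Psi_val_top (by omega) hi2]
        exact ⟨hi2, le_rfl⟩
    · exact hmono
  refine ⟨?_, hhess, ?_, hstrict⟩
  · intro i hi
    exact Psi_val_out hi (by omega)
  · rw [abelian_iff hhess]
    intro j hj1 hjn
    rw [Psi_one hS1] at hj1
    exact Psi_val_top (by omega) (by omega)

lemma T_sub {n : ℕ} (hn : 2 ≤ n) {h : ℕ → ℕ}
    (hnorm : ∀ i, i ∉ Set.Icc 1 n → h i = 0) (H : IsHessenberg n h)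
    (hab : IhAbelian n h) (hstr : ∀ i, 1 ≤ i → i ≤ n - 1 → i + 1 ≤ h i) :
    ∃ S ∈ goodFinset n, Psi n S = h := by
  set a := h 1 with ha
  have ha2 : 2 ≤ a := hstr 1 le_rfl (by omega)
  have han : a ≤ n := (H.1 1 le_rfl (by omega)).2
  have hmono := hess_mono H
  have htop : ∀ j, a < j → j ≤ n → h j = n := by
    intro j hj1 hj2
    rcases eq_or_lt_of_le hj2 with he | hlt
    · have := H.1 j (by omega) hj2
      omega
    · exact (abelian_iff H).1 hab j hj1 hlt
  have hka : ∀ k, 1 ≤ k → k ≤ a → a ≤ h k := fun k hk1 hk2 => hmono 1 k le_rfl hk1 (by omega)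
  set g := fun k => h k + k - (a + 1) with hg
  have hgmono : ∀ k l, 1 ≤ k → k < l → l ≤ a → g k < g l := by
    intro k l hk1 hkl hla
    have h1 := hka k hk1 (by omega)
    have h2 := hmono k l hk1 (by omega) (by omega)
    simp only [hg]
    omega
  have hg1 : g 1 = 0 := by simp only [hg]; omega
  set S := (Finset.Icc 2 a).image g with hS
  have hcard : S.card = a - 1 := by
    rw [hS, Finset.card_image_of_injOn, Nat.card_Icc]
    · omega
    intro x hx y hy hxy
    simp only [Finset.mem_coe, Finset.mem_Icc] at hx hy
    rcases lt_trichotomy x y with hlt | he | hlt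
    · have := hgmono x y (by omega) hlt hy.2; omega
    · exact he
    · have := hgmono y x (by omega) hlt hx.2; omega
  have hmemS : ∀ x ∈ S, 1 ≤ x ∧ x ≤ n - 1 := by
    intro x hx
    rw [hS] at hx
    obtain ⟨k, hk, rfl⟩ := Finset.mem_image.1 hx
    rw [Finset.mem_Icc] at hk
    have h1 : g 1 < g k := hgmono 1 k le_rfl (by omega) hk.2
    have h2 : g k ≤ g a := by
      rcases eq_or_lt_of_le hk.2 with he | hlt
      · rw [he]
      · exact le_of_lt (hgmono k a (by omega) hlt le_rfl)
    have h3 : h a ≤ n := (H.1 a (by omega) han).2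
    have h4 : g a = h a - 1 := by simp only [hg]; have := hka a (by omega) le_rfl; omega
    constructor
    · omega
    · rw [h4] at h2; omega
  have hSgood : S ∈ goodFinset n := by
    rw [mem_goodFinset]
    refine ⟨fun x hx => Finset.mem_Icc.2 (hmemS x hx), ?_, ?_⟩
    · intro hemp
      have : g 2 ∈ S := Finset.mem_image_of_mem _ (Finset.mem_Icc.2 ⟨le_rfl, ha2⟩)
      rw [hemp] at this
      simpa using this
    · intro b hb1 hb2 hbe
      have hcb : b = a - 1 := by
        have := hbe ▸ hcard
        rw [Nat.card_Icc] at this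
        omega
      have hga : g a ∈ S := Finset.mem_image_of_mem _ (Finset.mem_Icc.2 ⟨ha2, le_rfl⟩)
      rw [hbe] at hga
      have hgale : g a ≤ b := (Finset.mem_Icc.1 hga).2
      have hstra : a + 1 ≤ h a := hstr a (by omega) (by omega)
      have : g a = h a - 1 := by simp only [hg]; have := hka a (by omega) le_rfl; omega
      omega
  refine ⟨S, hSgood, ?_⟩
  have hca : S.card + 1 = a := by omega
  have hins : insert 0 S = Finset.image g (Finset.Icc 1 a) := by
    have : Finset.Icc 1 a = insert 1 (Finset.Icc 2 a) := by
      ext y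
      simp only [Finset.mem_Icc, Finset.mem_insert]
      omega
    rw [this, Finset.image_insert, hg1, hS]
  funext k
  rcases Nat.eq_zero_or_pos k with rfl | hk1
  · rw [hnorm 0 (by simp)]
    simp [Psi]
  rcases le_or_gt k a with hk2 | hk2
  · have hS1 := (mem_goodFinset.1 hSgood).1
    rw [Psi_val hS1 hk1 (by omega), hins, nthEl_image hgmono k hk1 hk2]
    have := hka k hk1 hk2
    simp only [hg]
    omega
  · rcases le_or_gt k n with hk3 | hk3
    · rw [Psi_val_top (by omega) hk3]
      exact (htop k hk2 hk3).symm
    · rw [Psi_val_out (by simp only [Set.mem_Icc]; omega) (by omega)]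
      exact (hnorm k (by simp only [Set.mem_Icc]; omega)).symm

lemma Psi_injOn {n : ℕ} (hn : 2 ≤ n) :
    Set.InjOn (Psi n) ↑(goodFinset n) := by
  intro S hS S' hS' heq
  obtain ⟨h1, h2, h3⟩ := mem_goodFinset.1 (Finset.mem_coe.1 hS)
  obtain ⟨h1', h2', h3'⟩ := mem_goodFinset.1 (Finset.mem_coe.1 hS')
  have hcc : S.card = S'.card := by
    have e1 : Psi n S 1 = S.card + 1 := Psi_one h1
    have e2 : Psi n S' 1 = S'.card + 1 := Psi_one h1'
    rw [heq] at e1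
    omega
  have hN : ∀ i, i ≤ S.card → nthEl (insert 0 S) i = nthEl (insert 0 S') i := by
    intro i hi
    have e1 := Psi_val (n := n) h1 (k := i + 1) (by omega) (by omega)
    have e2 := Psi_val (n := n) h1' (k := i + 1) (by omega) (by omega)
    rw [heq] at e1
    rw [e1] at e2
    simp only [Nat.add_sub_cancel] at e2
    omega
  have hci := card_insert_S h1
  have hci' := card_insert_S h1'
  ext x
  constructor
  · intro hx
    obtain ⟨i, hi, he⟩ := nthEl_of_mem (Finset.mem_insert_of_mem hx)
    rw [hci] at hi
    have : nthEl (insert 0 S') i = x := by rw [← hN i (by omega)]; exact he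
    have hmem : x ∈ insert 0 S' := this ▸ nthEl_mem (by omega)
    have hx1 : 1 ≤ x := (Finset.mem_Icc.1 (h1 hx)).1
    rcases Finset.mem_insert.1 hmem with h0 | hm
    · omega
    · exact hm
  · intro hx
    obtain ⟨i, hi, he⟩ := nthEl_of_mem (Finset.mem_insert_of_mem hx)
    rw [hci'] at hi
    have : nthEl (insert 0 S) i = x := by rw [hN i (by omega)]; exact he
    have hmem : x ∈ insert 0 S := this ▸ nthEl_mem (by omega)
    have hx1 : 1 ≤ x := (Finset.mem_Icc.1 (h1' hx)).1
    rcases Finset.mem_insert.1 hmem with h0 | hm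
    · omega
    · exact hm

lemma card_goodFinset {n : ℕ} (hn : 2 ≤ n) :
    (goodFinset n).card = 2 ^ (n - 1) - (n - 1) := by
  have hbadsub : insert ∅ ((Finset.Icc 1 (n-2)).image (fun b => Finset.Icc 1 b)) ⊆
      (Finset.Icc 1 (n-1)).powerset := by
    intro x hx
    rcases Finset.mem_insert.1 hx with rfl | hm
    · simp
    · obtain ⟨b, hb, rfl⟩ := Finset.mem_image.1 hm
      rw [Finset.mem_Icc] at hb
      exact Finset.mem_powerset.2 (Finset.Icc_subset_Icc le_rfl (by omega))
  have hbadcard : (insert ∅ ((Finset.Icc 1 (n-2)).image (fun b => Finset.Icc 1 b))).card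
      = n - 1 := by
    rw [Finset.card_insert_of_notMem, Finset.card_image_of_injOn, Nat.card_Icc]
    · omega
    · intro x hx y hy hxy
      rw [Finset.mem_coe, Finset.mem_Icc] at hx hy
      have hxy' : Finset.Icc 1 x = Finset.Icc 1 y := hxy
      have : (Finset.Icc 1 x).card = (Finset.Icc 1 y).card := by rw [hxy']
      rw [Nat.card_Icc, Nat.card_Icc] at this
      omega
    · intro hm
      obtain ⟨b, hb, hbe⟩ := Finset.mem_image.1 hm
      rw [Finset.mem_Icc] at hb
      have : (1 : ℕ) ∈ Finset.Icc 1 b := Finset.mem_Icc.2 ⟨le_rfl, hb.1⟩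
      rw [hbe] at this
      simpa using this
  unfold goodFinset
  rw [Finset.card_sdiff_of_subset hbadsub, hbadcard, Finset.card_powerset, Nat.card_Icc]
  simp

theorem stmt19 (n : ℕ) (hn : 1 ≤ n) :
    Set.ncard {h : ℕ → ℕ | (∀ i, i ∉ Set.Icc 1 n → h i = 0) ∧
        IsHessenberg n h ∧ IhAbelian n h ∧
        (∀ i, 1 ≤ i → i ≤ n - 1 → i + 1 ≤ h i)} =
      2 ^ (n - 1) - (n - 1) := by
  rcases eq_or_lt_of_le hn with he | hn2
  · -- n = 1
    subst he
    have hset : {h : ℕ → ℕ | (∀ i, i ∉ Set.Icc 1 1 → h i = 0) ∧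
        IsHessenberg 1 h ∧ IhAbelian 1 h ∧
        (∀ i, 1 ≤ i → i ≤ 1 - 1 → i + 1 ≤ h i)} =
        {fun i => if i = 1 then 1 else 0} := by
      ext h
      simp only [Set.mem_setOf_eq, Set.mem_singleton_iff]
      constructor
      · rintro ⟨hnorm, H, _, _⟩
        funext i
        rcases eq_or_ne i 1 with rfl | hne
        · have := H.1 1 le_rfl le_rfl
          simp only [if_pos rfl, if_true]
          norm_num
          omega
        · rw [if_neg hne]
          exact hnorm i (by simp only [Set.mem_Icc]; omega)
      · rintro rfl
        refine ⟨fun i hi => ?_, ⟨fun i hi1 hi2 => ?_, fun i hi1 hi2 => ?_⟩, ?_, fun i hi1 hi2 => ?_⟩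
        · simp only [Set.mem_Icc, not_and, not_le] at hi
          by_cases h1 : i = 1
          · subst h1; exact absurd (hi le_rfl) (by omega)
          · simp only [if_neg h1]
        · have : i = 1 := le_antisymm hi2 hi1
          subst this
          norm_num
        · omega
        · rintro ⟨i, j, k, hm1, hm2⟩
          simp only [Ih, Set.mem_setOf_eq] at hm1
          omega
        · omega
    rw [hset]
    simp
  · -- n ≥ 2
    have hn2' : 2 ≤ n := hn2
    have hset : {h : ℕ → ℕ | (∀ i, i ∉ Set.Icc 1 n → h i = 0) ∧
        IsHessenberg n h ∧ IhAbelian n h ∧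
        (∀ i, 1 ≤ i → i ≤ n - 1 → i + 1 ≤ h i)} = Psi n '' ↑(goodFinset n) := by
      ext h
      simp only [Set.mem_setOf_eq, Set.mem_image, Finset.mem_coe]
      constructor
      · rintro ⟨hnorm, H, hab, hstr⟩
        obtain ⟨S, hS, hSe⟩ := T_sub hn2' hnorm H hab hstr
        exact ⟨S, hS, hSe⟩
      · rintro ⟨S, hS, rfl⟩
        exact Psi_mem hn2' hS
    rw [hset, Set.ncard_image_of_injOn (Psi_injOn hn2'), Set.ncard_coe_finset,
      card_goodFinset hn2']
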